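/- Let W : [0,1]² → [0,1] be a Lebesgue measurable almost kernel for <, and define U₁ by: U₁(x,y) = W(x,y) at Lebesgue points of W, U₁(x,y) = 1 at density points of {(x,y) : W(x,y) = 1}, and U₁(x,y) = 0 otherwise. Then (i) if U₁(x,y) > 0 then x < y, and (ii) if U₁(x,y) > 0 and U₁(y,z) > 0 then U₁(x,z) = 1; moreover U₁ = W almost everywhere. -/

import Mathlib

open MeasureTheory

/-- The unit square `[0,1]²`. -/
def unitSq : Set (ℝ × ℝ) := Set.Icc (0:ℝ) 1 ×ˢ Set.Icc (0:ℝ) 1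

/-- The square neighbourhood `(x ± ε) × (y ± ε)` of `p = (x,y)`, relative to `[0,1]²`. -/
def nbhd (p : ℝ × ℝ) (ε : ℝ) : Set (ℝ × ℝ) :=
  (Set.Ioo (p.1 - ε) (p.1 + ε) ×ˢ Set.Ioo (p.2 - ε) (p.2 + ε)) ∩ unitSq

/-- `p` is a Lebesgue point of `W` (relative to the square neighbourhoods in `[0,1]²`). -/
def IsLebPoint (W : ℝ × ℝ → ℝ) (p : ℝ × ℝ) : Prop :=
  Filter.Tendsto
    (fun ε : ℝ => (∫ q in nbhd p ε, |W q - W p|) / (volume (nbhd p ε)).toReal)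
    (nhdsWithin 0 (Set.Ioi 0)) (nhds 0)

/-- `p` is a density point of the set `E` (relative to square neighbourhoods in `[0,1]²`). -/
def IsDensityPoint (E : Set (ℝ × ℝ)) (p : ℝ × ℝ) : Prop :=
  Filter.Tendsto
    (fun ε : ℝ => (volume (E ∩ nbhd p ε)).toReal / (volume (nbhd p ε)).toReal)
    (nhdsWithin 0 (Set.Ioi 0)) (nhds 1)

namespace Stmt15Aux

open Set Filter
open scoped ENNReal

noncomputable def J (x ε : ℝ) : Set ℝ := Set.Ioo (x - ε) (x + ε) ∩ Set.Icc 0 1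

lemma measJ {x ε : ℝ} : MeasurableSet (J x ε) :=
  measurableSet_Ioo.inter measurableSet_Icc

lemma J_subset {x ε : ℝ} : J x ε ⊆ Set.Icc 0 1 := Set.inter_subset_right

lemma meas_unitSq : MeasurableSet unitSq := measurableSet_Icc.prod measurableSet_Icc

lemma nbhd_eq (p : ℝ × ℝ) (ε : ℝ) : nbhd p ε = J p.1 ε ×ˢ J p.2 ε := by
  rw [nbhd, unitSq, Set.prod_inter_prod, J, J]

lemma meas_nbhd {p : ℝ × ℝ} {ε : ℝ} : MeasurableSet (nbhd p ε) := by
  rw [nbhd_eq]; exact measJ.prod measJ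

lemma nbhd_subset {p : ℝ × ℝ} {ε : ℝ} : nbhd p ε ⊆ unitSq := Set.inter_subset_right

lemma vol_nbhd_eq (p : ℝ × ℝ) (ε : ℝ) :
    volume (nbhd p ε) = volume (J p.1 ε) * volume (J p.2 ε) := by
  rw [nbhd_eq, Measure.volume_eq_prod, Measure.prod_prod]

lemma volJ_le {x ε : ℝ} : volume (J x ε) ≤ ENNReal.ofReal (2 * ε) := by
  refine le_trans (measure_mono Set.inter_subset_left) ?_
  rw [Real.volume_Ioo]
  exact ENNReal.ofReal_le_ofReal (by ring_nf; linarith [le_refl ε])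

lemma volJ_ge {x ε : ℝ} (hx : x ∈ Set.Icc (0:ℝ) 1) (hε : 0 < ε) (hε1 : ε ≤ 1) :
    ENNReal.ofReal ε ≤ volume (J x ε) := by
  obtain ⟨hx0, hx1⟩ := hx
  have hsub : Set.Ioo (max (x - ε) 0) (min (x + ε) 1) ⊆ J x ε := by
    intro a ha
    obtain ⟨ha1, ha2⟩ := ha
    refine ⟨⟨lt_of_le_of_lt (le_max_left _ _) ha1, lt_of_lt_of_le ha2 (min_le_left _ _)⟩,
      le_of_lt (lt_of_le_of_lt (le_max_right _ _) ha1),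
      le_of_lt (lt_of_lt_of_le ha2 (min_le_right _ _))⟩
  refine le_trans ?_ (measure_mono hsub)
  rw [Real.volume_Ioo]
  refine ENNReal.ofReal_le_ofReal ?_
  rcases max_cases (x - ε) 0 with ⟨h, _⟩ | ⟨h, _⟩ <;> rw [h] <;> linarith
    [le_min (show x ≤ x + ε by linarith) hx1, le_min (show ε ≤ x + ε by linarith) hε1]

lemma volJ_ne_top {x ε : ℝ} : volume (J x ε) ≠ ⊤ :=
  ne_top_of_le_ne_top ENNReal.ofReal_ne_top volJ_le

lemma vol_nbhd_ne_top {p : ℝ × ℝ} {ε : ℝ} : volume (nbhd p ε) ≠ ⊤ := by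
  rw [vol_nbhd_eq]; exact ENNReal.mul_ne_top volJ_ne_top volJ_ne_top

lemma vol_nbhd_pos {p : ℝ × ℝ} {ε : ℝ} (hp : p ∈ unitSq) (hε : 0 < ε) (hε1 : ε ≤ 1) :
    0 < volume (nbhd p ε) := by
  rw [vol_nbhd_eq]
  have h1 := volJ_ge hp.1 hε hε1
  have h2 := volJ_ge hp.2 hε hε1
  have : (0:ℝ≥0∞) < ENNReal.ofReal ε := by simp [hε]
  exact ENNReal.mul_pos (lt_of_lt_of_le this h1).ne' (lt_of_lt_of_le this h2).ne' |>.bot_lt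

lemma ev_small : ∀ᶠ ε in nhdsWithin (0:ℝ) (Set.Ioi 0), 0 < ε ∧ ε ≤ 1 := by
  have h1 : ∀ᶠ ε in nhdsWithin (0:ℝ) (Set.Ioi 0), ε ∈ Set.Ioi (0:ℝ) := self_mem_nhdsWithin
  have h2 : ∀ᶠ ε in nhdsWithin (0:ℝ) (Set.Ioi 0), ε < 1 :=
    Filter.Eventually.filter_mono nhdsWithin_le_nhds
      (Filter.Tendsto.eventually_lt_const (by norm_num) Filter.tendsto_id)
  filter_upwards [h1, h2] with ε hε hε1
  exact ⟨hε, le_of_lt hε1⟩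

lemma ratio_le_one {E : Set (ℝ × ℝ)} {p : ℝ × ℝ} {ε : ℝ} :
    (volume (E ∩ nbhd p ε)).toReal ≤ (volume (nbhd p ε)).toReal :=
  ENNReal.toReal_mono vol_nbhd_ne_top (measure_mono Set.inter_subset_right)

lemma isDensityPoint_of_lb {E : Set (ℝ × ℝ)} {p : ℝ × ℝ} (hp : p ∈ unitSq)
    (h : ∀ δ : ℝ, 0 < δ → ∀ᶠ ε in nhdsWithin (0:ℝ) (Set.Ioi 0),
      (1 - δ) * (volume (nbhd p ε)).toReal ≤ (volume (E ∩ nbhd p ε)).toReal) :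
    IsDensityPoint E p := by
  rw [IsDensityPoint, Metric.tendsto_nhds]
  intro δ hδ
  filter_upwards [h (δ/2) (by linarith), ev_small] with ε hlb hε
  obtain ⟨hε0, hε1⟩ := hε
  have hv : 0 < (volume (nbhd p ε)).toReal :=
    ENNReal.toReal_pos (vol_nbhd_pos hp hε0 hε1).ne' vol_nbhd_ne_top
  have hub : (volume (E ∩ nbhd p ε)).toReal / (volume (nbhd p ε)).toReal ≤ 1 :=
    div_le_one_of_le₀ ratio_le_one hv.le
  have hlb' : 1 - δ/2 ≤ (volume (E ∩ nbhd p ε)).toReal / (volume (nbhd p ε)).toReal :=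
    (le_div_iff₀ hv).2 hlb
  rw [Real.dist_eq, abs_sub_lt_iff]
  constructor <;> linarith

lemma densityPoint_lb {E : Set (ℝ × ℝ)} {p : ℝ × ℝ} (h : IsDensityPoint E p)
    {δ : ℝ} (hδ : 0 < δ) : ∀ᶠ ε in nhdsWithin (0:ℝ) (Set.Ioi 0),
      (1 - δ) * (volume (nbhd p ε)).toReal ≤ (volume (E ∩ nbhd p ε)).toReal := by
  have := Metric.tendsto_nhds.1 h δ hδ
  filter_upwards [this, ev_small] with ε hdist hε
  obtain ⟨hε0, hε1⟩ := hε
  rw [Real.dist_eq, abs_sub_lt_iff] at hdist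
  rcases eq_or_lt_of_le (ENNReal.toReal_nonneg :
      (0:ℝ) ≤ (volume (nbhd p ε)).toReal) with hv | hv
  · nlinarith [ENNReal.toReal_nonneg (a := volume (E ∩ nbhd p ε))]
  · have h1 : 1 - δ < (volume (E ∩ nbhd p ε)).toReal / (volume (nbhd p ε)).toReal := by
      linarith [hdist.2]
    have := (le_div_iff₀ hv).1 h1.le
    linarith

lemma vol_inter_congr {E F Z : Set (ℝ × ℝ)} (hZ : volume Z = 0) (hEF : E \ F ⊆ Z)
    (hFE : F \ E ⊆ Z) (s : Set (ℝ × ℝ)) : volume (E ∩ s) = volume (F ∩ s) := by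
  have key : ∀ (A B : Set (ℝ × ℝ)), A \ B ⊆ Z → volume (A ∩ s) ≤ volume (B ∩ s) := by
    intro A B hAB
    calc volume (A ∩ s) ≤ volume ((B ∩ s) ∪ Z) := by
          refine measure_mono fun q hq => ?_
          by_cases hB : q ∈ B
          · exact Or.inl ⟨hB, hq.2⟩
          · exact Or.inr (hAB ⟨hq.1, hB⟩)
      _ ≤ volume (B ∩ s) + volume Z := measure_union_le _ _
      _ = volume (B ∩ s) := by rw [hZ, add_zero]
  exact le_antisymm (key E F hEF) (key F E hFE)

lemma isDensityPoint_congr {E F Z : Set (ℝ × ℝ)} (hZ : volume Z = 0) (hEF : E \ F ⊆ Z)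
    (hFE : F \ E ⊆ Z) {p : ℝ × ℝ} (h : IsDensityPoint E p) : IsDensityPoint F p := by
  rw [IsDensityPoint] at h ⊢
  simp_rw [fun ε => vol_inter_congr hZ hFE hEF (nbhd p ε)]
  exact h

lemma ballEqProd (p : ℝ × ℝ) (ε : ℝ) :
    Metric.ball p ε = Set.Ioo (p.1-ε) (p.1+ε) ×ˢ Set.Ioo (p.2-ε) (p.2+ε) := by
  obtain ⟨a, b⟩ := p
  rw [← ball_prod_same, Real.ball_eq_Ioo, Real.ball_eq_Ioo]

lemma cballEqProd (p : ℝ × ℝ) (ε : ℝ) :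
    Metric.closedBall p ε = Set.Icc (p.1-ε) (p.1+ε) ×ˢ Set.Icc (p.2-ε) (p.2+ε) := by
  obtain ⟨a, b⟩ := p
  rw [← closedBall_prod_same, Real.closedBall_eq_Icc, Real.closedBall_eq_Icc]

lemma ball_ae_cball (p : ℝ × ℝ) {ε : ℝ} (hε : 0 < ε) :
    Metric.ball p ε =ᵐ[volume] Metric.closedBall p ε := by
  rw [ae_eq_set]
  constructor
  · rw [Set.diff_eq_empty.2 Metric.ball_subset_closedBall]
    exact measure_empty
  · have hv : volume (Metric.closedBall p ε) = volume (Metric.ball p ε) := by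
      rw [ballEqProd, cballEqProd, Measure.volume_eq_prod, Measure.prod_prod, Measure.prod_prod,
        Real.volume_Ioo, Real.volume_Ioo, Real.volume_Icc, Real.volume_Icc]
    have hfin : volume (Metric.ball p ε) ≠ ⊤ := by
      rw [ballEqProd, Measure.volume_eq_prod, Measure.prod_prod, Real.volume_Ioo, Real.volume_Ioo]
      exact ENNReal.mul_ne_top ENNReal.ofReal_ne_top ENNReal.ofReal_ne_top
    rw [measure_diff Metric.ball_subset_closedBall measurableSet_ball.nullMeasurableSet hfin,
      hv, tsub_self]

def Posg (g : ℝ × ℝ → ℝ) : Set (ℝ × ℝ) := {q | q ∈ unitSq ∧ 0 < g q}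
def Oneg (g : ℝ × ℝ → ℝ) : Set (ℝ × ℝ) := {q | q ∈ unitSq ∧ g q = 1}
def sliceBad (g : ℝ × ℝ → ℝ) : Set (ℝ × ℝ) :=
  {q | volume ({b : ℝ | (0 < g (q.1, b) ∧ 0 < g (b, q.2)) ∧ g q ≠ 1} ∩ Set.Icc 0 1) ≠ 0}

lemma markov_aux {F : ℝ → ℝ≥0∞} (hF : AEMeasurable F volume) {K c : ℝ≥0∞}
    (hint : ∫⁻ a, F a ∂volume ≤ K) (hc0 : c ≠ 0) (hct : c ≠ ⊤) :
    volume {a | c ≤ F a} ≤ K / c := by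
  rw [ENNReal.le_div_iff_mul_le (Or.inl hc0) (Or.inl hct)]
  calc volume {a | c ≤ F a} * c = c * volume {a | c ≤ F a} := mul_comm _ _
    _ ≤ ∫⁻ a, F a ∂volume := mul_meas_ge_le_lintegral₀ hF c
    _ ≤ K := hint

lemma side_aux {A B : Set ℝ} {S : Set (ℝ × ℝ)} {F : ℝ → ℝ≥0∞}
    (hFmeas : Measurable F)
    (hempty : ∀ a ∉ A, F a = 0)
    (hfub : ∫⁻ a, F a ∂volume = volume S)
    {η' : ℝ≥0∞} (hvol : volume S ≤ η' * (volume A * volume B))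
    (hB0 : volume B ≠ 0) (hBt : volume B ≠ ⊤) :
    volume {a | volume B / 4 ≤ F a} ≤ 4 * η' * volume A ∧
      {a | volume B / 4 ≤ F a} ⊆ A := by
  have hc0 : volume B / 4 ≠ 0 := by
    simp [ENNReal.div_eq_zero_iff, hB0]
  have hct : volume B / 4 ≠ ⊤ := (ENNReal.div_lt_top hBt (by norm_num)).ne
  constructor
  · have h := markov_aux hFmeas.aemeasurable (hfub.le.trans hvol) hc0 hct
    refine h.trans ?_
    rw [ENNReal.div_le_iff_le_mul (Or.inl hc0) (Or.inl hct)]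
    have h44 : (4:ℝ≥0∞) * 4⁻¹ = 1 := ENNReal.mul_inv_cancel (by norm_num) (by norm_num)
    have heq : (4 * η' * volume A) * (volume B / 4)
        = ((4:ℝ≥0∞) * 4⁻¹) * (η' * (volume A * volume B)) := by
      rw [div_eq_mul_inv]; ring
    rw [heq, h44, one_mul]
  · intro a ha
    by_contra haA
    rw [Set.mem_setOf_eq, hempty a haA, le_zero_iff] at ha
    exact hc0 ha

/-- The quantitative transitivity estimate. -/
lemma core (g : ℝ × ℝ → ℝ) (hg : Measurable g) {x y z ε η : ℝ}
    (hη : 0 < η) (hη4 : η ≤ 1/4) (hε0 : 0 < ε) (hε1 : ε ≤ 1)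
    (hx : x ∈ Set.Icc (0:ℝ) 1) (hy : y ∈ Set.Icc (0:ℝ) 1) (hz : z ∈ Set.Icc (0:ℝ) 1)
    (hSB : volume (sliceBad g ∩ unitSq) = 0)
    (h1 : (1-η) * (volume (nbhd (x,y) ε)).toReal ≤ (volume (Posg g ∩ nbhd (x,y) ε)).toReal)
    (h2 : (1-η) * (volume (nbhd (y,z) ε)).toReal ≤ (volume (Posg g ∩ nbhd (y,z) ε)).toReal) :
    (1 - 8*η) * (volume (nbhd (x,z) ε)).toReal ≤ (volume (Oneg g ∩ nbhd (x,z) ε)).toReal := by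
  classical
  set Jx := J x ε with hJx
  set Jy := J y ε with hJy
  set Jz := J z ε with hJz
  have hmeasPos : MeasurableSet {q : ℝ × ℝ | 0 < g q} := measurableSet_lt measurable_const hg
  set S1 : Set (ℝ × ℝ) := (Jx ×ˢ Jy) ∩ {q | 0 < g q}ᶜ with hS1def
  set S2 : Set (ℝ × ℝ) := (Jy ×ˢ Jz) ∩ {q | 0 < g q}ᶜ with hS2def
  have hS1meas : MeasurableSet S1 := (measJ.prod measJ).inter hmeasPos.compl
  have hS2meas : MeasurableSet S2 := (measJ.prod measJ).inter hmeasPos.compl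
  have volbound : ∀ (a b : ℝ) (S : Set (ℝ × ℝ)), a ∈ Set.Icc (0:ℝ) 1 → b ∈ Set.Icc (0:ℝ) 1 →
      S = (J a ε ×ˢ J b ε) ∩ {q | 0 < g q}ᶜ → MeasurableSet S →
      (1-η) * (volume (nbhd (a,b) ε)).toReal ≤ (volume (Posg g ∩ nbhd (a,b) ε)).toReal →
      volume S ≤ ENNReal.ofReal η * (volume (J a ε) * volume (J b ε)) := by
    intro a b S ha hb hSdef hSmeas hlb
    have hnb : nbhd (a,b) ε = J a ε ×ˢ J b ε := nbhd_eq (a,b) ε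
    have hPn : Posg g ∩ nbhd (a,b) ε = nbhd (a,b) ε \ S := by
      ext q
      simp only [hSdef, Set.mem_inter_iff, Set.mem_diff, Set.mem_compl_iff, Set.mem_setOf_eq,
        Posg, hnb]
      constructor
      · rintro ⟨⟨hq1, hq2⟩, hq3⟩
        exact ⟨hq3, fun h => h.2 hq2⟩
      · rintro ⟨hq1, hq2⟩
        have : 0 < g q := by
          by_contra h
          exact hq2 ⟨hq1, h⟩
        exact ⟨⟨nbhd_subset (by rw [hnb]; exact hq1), this⟩, hq1⟩
    have hSsub : S ⊆ nbhd (a,b) ε := by rw [hSdef, hnb]; exact Set.inter_subset_left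
    have hdiff : volume (Posg g ∩ nbhd (a,b) ε) = volume (nbhd (a,b) ε) - volume S := by
      rw [hPn, measure_diff hSsub hSmeas.nullMeasurableSet
        (ne_top_of_le_ne_top vol_nbhd_ne_top (measure_mono hSsub))]
    have hSne : volume S ≠ ⊤ := ne_top_of_le_ne_top vol_nbhd_ne_top (measure_mono hSsub)
    have htr : (volume S).toReal ≤ η * (volume (nbhd (a,b) ε)).toReal := by
      have h1' : (volume (Posg g ∩ nbhd (a,b) ε)).toReal
          = (volume (nbhd (a,b) ε)).toReal - (volume S).toReal := by
        rw [hdiff, ENNReal.toReal_sub_of_le (measure_mono hSsub) vol_nbhd_ne_top]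
      rw [h1'] at hlb
      nlinarith [ENNReal.toReal_nonneg (a := volume (nbhd (a,b) ε))]
    calc volume S = ENNReal.ofReal (volume S).toReal := (ENNReal.ofReal_toReal hSne).symm
      _ ≤ ENNReal.ofReal (η * (volume (nbhd (a,b) ε)).toReal) := ENNReal.ofReal_le_ofReal htr
      _ = ENNReal.ofReal η * ENNReal.ofReal (volume (nbhd (a,b) ε)).toReal :=
          ENNReal.ofReal_mul hη.le
      _ = ENNReal.ofReal η * volume (nbhd (a,b) ε) := by
          rw [ENNReal.ofReal_toReal vol_nbhd_ne_top]
      _ = ENNReal.ofReal η * (volume (J a ε) * volume (J b ε)) := by rw [vol_nbhd_eq]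
  have hvolS1 := volbound x y S1 hx hy hS1def hS1meas h1
  have hvolS2 := volbound y z S2 hy hz hS2def hS2meas h2
  have hJy0 : volume Jy ≠ 0 := by
    intro h
    have := volJ_ge hy hε0 hε1
    rw [← hJy, h] at this
    simp [le_zero_iff, ENNReal.ofReal_eq_zero] at this
    linarith
  have hJyt : volume Jy ≠ ⊤ := volJ_ne_top
  have hfub1 : ∫⁻ a, volume (Prod.mk a ⁻¹' S1) ∂volume = volume S1 := by
    rw [Measure.volume_eq_prod, Measure.prod_apply hS1meas]
  obtain ⟨hBadX, hBadXsub⟩ := side_aux (measurable_measure_prodMk_left hS1meas)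
    (fun a haA => by
      have : Prod.mk a ⁻¹' S1 = ∅ := by
        ext b
        simp only [hS1def, Set.mem_preimage, Set.mem_inter_iff, Set.mem_prod,
          Set.mem_empty_iff_false, iff_false, not_and, Set.mem_compl_iff]
        intro h
        exact absurd h.1 haA
      rw [this, measure_empty])
    hfub1 hvolS1 hJy0 hJyt
  have hfub2 : ∫⁻ c, volume ((fun b => (b, c)) ⁻¹' S2) ∂volume = volume S2 := by
    rw [Measure.volume_eq_prod, Measure.prod_apply_symm hS2meas]
  obtain ⟨hBadZ, hBadZsub⟩ := side_aux (measurable_measure_prodMk_right hS2meas)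
    (fun c hcA => by
      have : (fun b => (b, c)) ⁻¹' S2 = ∅ := by
        ext b
        simp only [hS2def, Set.mem_preimage, Set.mem_inter_iff, Set.mem_prod,
          Set.mem_empty_iff_false, iff_false, not_and, Set.mem_compl_iff]
        intro h
        exact absurd h.2 hcA
      rw [this, measure_empty])
    hfub2 (by
      calc volume S2 ≤ ENNReal.ofReal η * (volume Jy * volume Jz) := hvolS2
        _ = ENNReal.ofReal η * (volume Jz * volume Jy) := by ring_nf
      ) hJy0 hJyt
  set BadX := {a | volume Jy / 4 ≤ volume (Prod.mk a ⁻¹' S1)} with hBadXdef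
  set BadZ := {c | volume Jy / 4 ≤ volume ((fun b => (b, c)) ⁻¹' S2)} with hBadZdef
  set GoodX := Jx \ BadX with hGoodXdef
  set GoodZ := Jz \ BadZ with hGoodZdef
  have hkey : (GoodX ×ˢ GoodZ) \ sliceBad g ⊆ Oneg g ∩ nbhd (x,z) ε := by
    rintro ⟨a, c⟩ ⟨⟨haG, hcG⟩, hnsb⟩
    have haJ : a ∈ Jx := haG.1
    have hcJ : c ∈ Jz := hcG.1
    have hmem : (a, c) ∈ nbhd (x,z) ε := by
      rw [nbhd_eq]; exact ⟨haJ, hcJ⟩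
    have hsq : (a, c) ∈ unitSq := nbhd_subset hmem
    refine ⟨⟨hsq, ?_⟩, hmem⟩
    by_contra hne
    set B1 := {b ∈ Jy | 0 < g (a, b)} with hB1def
    set B2 := {b ∈ Jy | 0 < g (b, c)} with hB2def
    have hB2meas : MeasurableSet B2 :=
      measJ.inter ((hg.comp (measurable_id.prodMk measurable_const)) measurableSet_Ioi)
    have hcover1 : Jy ⊆ B1 ∪ Prod.mk a ⁻¹' S1 := by
      intro b hb
      by_cases hgb : 0 < g (a, b)
      · exact Or.inl ⟨hb, hgb⟩
      · exact Or.inr ⟨⟨haJ, hb⟩, hgb⟩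
    have hcover2 : Jy ⊆ B2 ∪ (fun b => (b, c)) ⁻¹' S2 := by
      intro b hb
      by_cases hgb : 0 < g (b, c)
      · exact Or.inl ⟨hb, hgb⟩
      · exact Or.inr ⟨⟨hb, hcJ⟩, hgb⟩
    have hF1 : volume (Prod.mk a ⁻¹' S1) < volume Jy / 4 := not_le.mp haG.2
    have hF2 : volume ((fun b => (b, c)) ⁻¹' S2) < volume Jy / 4 := not_le.mp hcG.2
    have hint : volume (B1 ∩ B2) ≠ 0 := by
      intro hBB
      have hUnion : volume (B1 ∪ B2) = volume B1 + volume B2 := by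
        have := measure_union_add_inter (μ := volume) B1 hB2meas
        rw [hBB, add_zero] at this
        exact this
      have hB1fin : volume B1 ≠ ⊤ :=
        ne_top_of_le_ne_top hJyt (measure_mono (Set.sep_subset _ _))
      have hB2fin : volume B2 ≠ ⊤ :=
        ne_top_of_le_ne_top hJyt (measure_mono (Set.sep_subset _ _))
      have hr : (0:ℝ) < (volume Jy).toReal := ENNReal.toReal_pos hJy0 hJyt
      have hq4 : (volume Jy / 4).toReal = (volume Jy).toReal / 4 := by
        rw [ENNReal.toReal_div]; norm_num
      have hlb1 : (volume Jy).toReal ≤ (volume B1).toReal + (volume Jy).toReal / 4 := by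
        have hb : volume Jy ≤ volume B1 + volume (Prod.mk a ⁻¹' S1) :=
          (measure_mono hcover1).trans (measure_union_le _ _)
        have h' := ENNReal.toReal_mono (by
          exact ENNReal.add_ne_top.2 ⟨hB1fin, (hF1.trans_le le_top).ne⟩) hb
        rw [ENNReal.toReal_add hB1fin (hF1.trans_le le_top).ne] at h'
        have h'' : (volume (Prod.mk a ⁻¹' S1)).toReal ≤ (volume Jy).toReal / 4 := by
          rw [← hq4]
          exact ENNReal.toReal_mono (ENNReal.div_lt_top hJyt (by norm_num)).ne hF1.le
        linarith
      have hlb2 : (volume Jy).toReal ≤ (volume B2).toReal + (volume Jy).toReal / 4 := by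
        have hb : volume Jy ≤ volume B2 + volume ((fun b => (b, c)) ⁻¹' S2) :=
          (measure_mono hcover2).trans (measure_union_le _ _)
        have h' := ENNReal.toReal_mono (by
          exact ENNReal.add_ne_top.2 ⟨hB2fin, (hF2.trans_le le_top).ne⟩) hb
        rw [ENNReal.toReal_add hB2fin (hF2.trans_le le_top).ne] at h'
        have h'' : (volume ((fun b => (b, c)) ⁻¹' S2)).toReal ≤ (volume Jy).toReal / 4 := by
          rw [← hq4]
          exact ENNReal.toReal_mono (ENNReal.div_lt_top hJyt (by norm_num)).ne hF2.le
        linarith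
      have hub : (volume (B1 ∪ B2)).toReal ≤ (volume Jy).toReal := by
        refine ENNReal.toReal_mono hJyt (measure_mono ?_)
        rw [Set.union_subset_iff]
        exact ⟨Set.sep_subset _ _, Set.sep_subset _ _⟩
      rw [hUnion, ENNReal.toReal_add hB1fin hB2fin] at hub
      linarith
    apply hint
    have hnsb' : volume ({b : ℝ | (0 < g (a, b) ∧ 0 < g (b, c)) ∧ g (a, c) ≠ 1}
        ∩ Set.Icc 0 1) = 0 := by
      by_contra h
      exact hnsb h
    refine measure_mono_null ?_ hnsb'
    rintro b ⟨⟨hbJ1, hgb1⟩, ⟨hbJ2, hgb2⟩⟩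
    exact ⟨⟨⟨hgb1, hgb2⟩, hne⟩, J_subset hbJ1⟩
  have goodbound : ∀ (Jw : Set ℝ) (Bad : Set ℝ), MeasurableSet Jw → volume Jw ≠ ⊤ →
      Bad ⊆ Jw → volume Bad ≤ 4 * ENNReal.ofReal η * volume Jw →
      (1 - 4*η) * (volume Jw).toReal ≤ (volume (Jw \ Bad)).toReal := by
    intro Jw Bad hJw hJwt hBsub hBle
    have hBfin : volume Bad ≠ ⊤ := ne_top_of_le_ne_top hJwt (measure_mono hBsub)
    have hGfin : volume (Jw \ Bad) ≠ ⊤ :=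
      ne_top_of_le_ne_top hJwt (measure_mono Set.diff_subset)
    have hcover : volume Jw ≤ volume (Jw \ Bad) + volume Bad := by
      refine (measure_mono ?_).trans (measure_union_le _ _)
      intro w hw
      by_cases hwB : w ∈ Bad
      · exact Or.inr hwB
      · exact Or.inl ⟨hw, hwB⟩
    have h1' := ENNReal.toReal_mono (ENNReal.add_ne_top.2 ⟨hGfin, hBfin⟩) hcover
    rw [ENNReal.toReal_add hGfin hBfin] at h1'
    have h2' : (volume Bad).toReal ≤ 4 * η * (volume Jw).toReal := by
      have := ENNReal.toReal_mono (by
          refine ENNReal.mul_ne_top (ENNReal.mul_ne_top (by norm_num) ENNReal.ofReal_ne_top) hJwt)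
        hBle
      rw [ENNReal.toReal_mul, ENNReal.toReal_mul, ENNReal.toReal_ofReal hη.le] at this
      simpa using this
    nlinarith [ENNReal.toReal_nonneg (a := volume Jw)]
  have hGX := goodbound Jx BadX measJ volJ_ne_top hBadXsub hBadX
  have hGZ := goodbound Jz BadZ measJ volJ_ne_top hBadZsub hBadZ
  have hprodvol : volume (GoodX ×ˢ GoodZ) = volume GoodX * volume GoodZ := by
    rw [Measure.volume_eq_prod, Measure.prod_prod]
  have hnull : volume ((GoodX ×ˢ GoodZ) ∩ sliceBad g) = 0 := by
    refine measure_mono_null ?_ hSB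
    rintro ⟨a, c⟩ ⟨⟨haG, hcG⟩, hsb⟩
    exact ⟨hsb, J_subset haG.1, J_subset hcG.1⟩
  have hfinal : volume GoodX * volume GoodZ ≤ volume (Oneg g ∩ nbhd (x,z) ε) := by
    rw [← hprodvol, ← measure_diff_null' hnull]
    exact measure_mono hkey
  have hOfin : volume (Oneg g ∩ nbhd (x,z) ε) ≠ ⊤ :=
    ne_top_of_le_ne_top vol_nbhd_ne_top (measure_mono Set.inter_subset_right)
  have htoReal : (volume GoodX).toReal * (volume GoodZ).toReal
      ≤ (volume (Oneg g ∩ nbhd (x,z) ε)).toReal := by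
    have := ENNReal.toReal_mono hOfin hfinal
    rwa [ENNReal.toReal_mul] at this
  have hv : (volume (nbhd (x,z) ε)).toReal = (volume Jx).toReal * (volume Jz).toReal := by
    rw [vol_nbhd_eq, ENNReal.toReal_mul]
  rw [hv]
  have h4η : 0 ≤ 1 - 4*η := by linarith
  have hvx : (0:ℝ) ≤ (volume Jx).toReal := ENNReal.toReal_nonneg
  have hvz : (0:ℝ) ≤ (volume Jz).toReal := ENNReal.toReal_nonneg
  have key2 : ((1-4*η) * (volume Jx).toReal) * ((1-4*η) * (volume Jz).toReal)
      ≤ (volume GoodX).toReal * (volume GoodZ).toReal :=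
    mul_le_mul hGX hGZ (mul_nonneg h4η hvz) ENNReal.toReal_nonneg
  have hpos : (0:ℝ) ≤ 16*η^2*((volume Jx).toReal*(volume Jz).toReal) := by positivity
  nlinarith [key2, htoReal, hpos]

end Stmt15Aux


open Stmt15Aux Set Filter

theorem stmt15 (W : ℝ × ℝ → ℝ)
    (hWmeas : AEMeasurable W (volume.restrict unitSq))
    (hWrange : ∀ p ∈ unitSq, W p ∈ Set.Icc (0:ℝ) 1)
    -- `W` is an almost kernel on `([0,1], Borel, Lebesgue, <)`:
    (hax1 : ∀ᵐ p ∂((volume.restrict (Set.Icc (0:ℝ) 1)).prod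
        (volume.restrict (Set.Icc (0:ℝ) 1))), 0 < W p → p.1 < p.2)
    (hax2 : ∀ᵐ t : ℝ × ℝ × ℝ ∂((volume.restrict (Set.Icc (0:ℝ) 1)).prod
        ((volume.restrict (Set.Icc (0:ℝ) 1)).prod (volume.restrict (Set.Icc (0:ℝ) 1)))),
      0 < W (t.1, t.2.1) → 0 < W (t.2.1, t.2.2) → W (t.1, t.2.2) = 1)
    -- `U₁` is defined by cases: the value of `W` at Lebesgue points of `W`, the value `1`
    -- at density points of `{W = 1}`, and `0` otherwise:
    (U₁ : ℝ × ℝ → ℝ)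
    (hU₁leb : ∀ p ∈ unitSq, IsLebPoint W p → U₁ p = W p)
    (hU₁dens : ∀ p ∈ unitSq, ¬ IsLebPoint W p →
      IsDensityPoint {q ∈ unitSq | W q = 1} p → U₁ p = 1)
    (hU₁zero : ∀ p ∈ unitSq, ¬ IsLebPoint W p →
      ¬ IsDensityPoint {q ∈ unitSq | W q = 1} p → U₁ p = 0) :
    (∀ p ∈ unitSq, 0 < U₁ p → p.1 < p.2) ∧
    (∀ x ∈ Set.Icc (0:ℝ) 1, ∀ y ∈ Set.Icc (0:ℝ) 1, ∀ z ∈ Set.Icc (0:ℝ) 1,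
      0 < U₁ (x, y) → 0 < U₁ (y, z) → U₁ (x, z) = 1) ∧
    (∀ᵐ p ∂(volume.restrict unitSq), U₁ p = W p) := by
  classical
  -- a measurable representative of `W`, truncated to `[0,1]`
  set g : ℝ × ℝ → ℝ := fun q => max 0 (min 1 (hWmeas.mk W q)) with hgdef
  have hgmeas : Measurable g :=
    measurable_const.max (measurable_const.min hWmeas.measurable_mk)
  have hgrange : ∀ q, g q ∈ Set.Icc (0:ℝ) 1 :=
    fun q => ⟨le_max_left _ _, max_le (by norm_num) (min_le_left _ _)⟩
  have hWg : ∀ᵐ q ∂(volume.restrict unitSq), W q = g q := by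
    filter_upwards [hWmeas.ae_eq_mk, ae_restrict_mem meas_unitSq] with q hq hmem
    rw [hgdef]
    simp only
    rw [← hq, min_eq_right (hWrange q hmem).2, max_eq_right (hWrange q hmem).1]
  have hN : volume ({q | W q ≠ g q} ∩ unitSq) = 0 := by
    have := ae_iff.1 hWg
    rwa [Measure.restrict_apply' meas_unitSq] at this
  -- product measure bookkeeping
  set ν : Measure ℝ := volume.restrict (Set.Icc (0:ℝ) 1) with hνdef
  haveI hprob : IsProbabilityMeasure ν := ⟨by
    rw [hνdef, Measure.restrict_apply_univ, Real.volume_Icc]; norm_num⟩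
  have hprodeq : ν.prod ν = volume.restrict unitSq := by
    rw [hνdef, Measure.prod_restrict, unitSq, ← Measure.volume_eq_prod]
  -- transfer axiom 1 to `g`
  have hax1g : ∀ᵐ q ∂(volume.restrict unitSq), 0 < g q → q.1 < q.2 := by
    rw [← hprodeq] at hWg ⊢
    filter_upwards [hax1, hWg] with q h1 h2 hg0
    exact h1 (by rw [h2]; exact hg0)
  have hM1 : volume ({q : ℝ × ℝ | 0 < g q ∧ ¬ q.1 < q.2} ∩ unitSq) = 0 := by
    have h := ae_iff.1 hax1g
    rw [Measure.restrict_apply' meas_unitSq] at h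
    have hset : {q : ℝ × ℝ | ¬(0 < g q → q.1 < q.2)} = {q | 0 < g q ∧ ¬ q.1 < q.2} := by
      ext q; simp [Classical.not_imp]
    rwa [hset] at h
  -- transfer axiom 2 to `g`
  have hWg2 : ∀ᵐ q ∂(ν.prod ν), W q = g q := by rwa [hprodeq]
  have mpFst : MeasurePreserving (Prod.fst : ℝ × ℝ → ℝ) (ν.prod ν) ν :=
    ⟨measurable_fst, by rw [Measure.map_fst_prod]; simp⟩
  have mpSnd : MeasurePreserving (Prod.snd : ℝ × ℝ → ℝ) (ν.prod ν) ν :=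
    ⟨measurable_snd, by rw [Measure.map_snd_prod]; simp⟩
  have mp1 : MeasurePreserving (Prod.map (id : ℝ → ℝ) (Prod.fst : ℝ × ℝ → ℝ))
      (ν.prod (ν.prod ν)) (ν.prod ν) := (MeasurePreserving.id ν).prod mpFst
  have mp3 : MeasurePreserving (Prod.map (id : ℝ → ℝ) (Prod.snd : ℝ × ℝ → ℝ))
      (ν.prod (ν.prod ν)) (ν.prod ν) := (MeasurePreserving.id ν).prod mpSnd
  have mp2 : MeasurePreserving (Prod.snd : ℝ × (ℝ × ℝ) → ℝ × ℝ)
      (ν.prod (ν.prod ν)) (ν.prod ν) :=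
    ⟨measurable_snd, by rw [Measure.map_snd_prod]; simp⟩
  have e1 := mp1.quasiMeasurePreserving.ae hWg2
  have e2 := mp2.quasiMeasurePreserving.ae hWg2
  have e3 := mp3.quasiMeasurePreserving.ae hWg2
  have hax2g : ∀ᵐ t : ℝ × ℝ × ℝ ∂(ν.prod (ν.prod ν)),
      0 < g (t.1, t.2.1) → 0 < g (t.2.1, t.2.2) → g (t.1, t.2.2) = 1 := by
    filter_upwards [hax2, e1, e2, e3] with t h he1 he2 he3 ha hb
    have he1' : W (t.1, t.2.1) = g (t.1, t.2.1) := he1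
    have he2' : W (t.2.1, t.2.2) = g (t.2.1, t.2.2) := he2
    have he3' : W (t.1, t.2.2) = g (t.1, t.2.2) := he3
    rw [← he3']
    exact h (by rw [he1']; exact ha) (by rw [he2']; exact hb)
  -- the triple bad set is null
  set M : Set (ℝ × ℝ × ℝ) :=
    {t | (0 < g (t.1, t.2.1) ∧ 0 < g (t.2.1, t.2.2)) ∧ g (t.1, t.2.2) ≠ 1} with hMdef
  have hg12 : Measurable fun t : ℝ × ℝ × ℝ => g (t.1, t.2.1) :=
    hgmeas.comp (measurable_fst.prodMk (measurable_fst.comp measurable_snd))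
  have hg23 : Measurable fun t : ℝ × ℝ × ℝ => g (t.2.1, t.2.2) :=
    hgmeas.comp ((measurable_fst.comp measurable_snd).prodMk
      (measurable_snd.comp measurable_snd))
  have hg13 : Measurable fun t : ℝ × ℝ × ℝ => g (t.1, t.2.2) :=
    hgmeas.comp (measurable_fst.prodMk (measurable_snd.comp measurable_snd))
  have hMmeas : MeasurableSet M := by
    refine MeasurableSet.inter ?_ ?_
    · exact (hg12 measurableSet_Ioi).inter (hg23 measurableSet_Ioi)
    · exact (hg13 (measurableSet_singleton 1)).compl
  have hM : (ν.prod (ν.prod ν)) M = 0 := by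
    have h := ae_iff.1 hax2g
    have hset : {t : ℝ × ℝ × ℝ | ¬(0 < g (t.1, t.2.1) → 0 < g (t.2.1, t.2.2)
        → g (t.1, t.2.2) = 1)} = M := by
      ext t; rw [hMdef]; simp only [Set.mem_setOf_eq, Classical.not_imp]; tauto
    rwa [hset] at h
  -- nullity of `sliceBad g`
  have hsbnull : volume (sliceBad g ∩ unitSq) = 0 := by
    have mpψ : MeasurePreserving
        (fun r : (ℝ × ℝ) × ℝ => (r.1.1, (r.2, r.1.2)))
        ((ν.prod ν).prod ν) (ν.prod (ν.prod ν)) := by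
      have h1 : MeasurePreserving (Prod.map (id : ℝ → ℝ) (Prod.swap : ℝ × ℝ → ℝ × ℝ))
          (ν.prod (ν.prod ν)) (ν.prod (ν.prod ν)) :=
        (MeasurePreserving.id ν).prod Measure.measurePreserving_swap
      have h2 := measurePreserving_prodAssoc ν ν ν
      exact h1.comp h2
    have hS3 : ((ν.prod ν).prod ν)
        ((fun r : (ℝ × ℝ) × ℝ => (r.1.1, (r.2, r.1.2))) ⁻¹' M) = 0 := by
      rw [mpψ.measure_preimage hMmeas.nullMeasurableSet, hM]
    have hpre : MeasurableSet ((fun r : (ℝ × ℝ) × ℝ => (r.1.1, (r.2, r.1.2))) ⁻¹' M) :=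
      hMmeas.preimage mpψ.measurable
    have hslice := (Measure.measure_prod_null hpre).1 hS3
    have h2 : ∀ᵐ q ∂(volume.restrict unitSq), q ∉ sliceBad g := by
      rw [← hprodeq]
      filter_upwards [hslice] with q hq
      intro hmem
      apply hmem
      have : ν {b : ℝ | (0 < g (q.1, b) ∧ 0 < g (b, q.2)) ∧ g q ≠ 1} = 0 := by
        have : (Prod.mk q ⁻¹' ((fun r : (ℝ × ℝ) × ℝ => (r.1.1, (r.2, r.1.2))) ⁻¹' M))
            = {b : ℝ | (0 < g (q.1, b) ∧ 0 < g (b, q.2)) ∧ g q ≠ 1} := by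
          ext b
          simp only [Set.mem_preimage, hMdef, Set.mem_setOf_eq]
        rw [← this]
        exact hq
      rwa [hνdef, Measure.restrict_apply' measurableSet_Icc] at this
    have := ae_iff.1 h2
    rw [Measure.restrict_apply' meas_unitSq] at this
    simpa [Set.setOf_mem_eq, not_not] using this
  -- integrability of |W - c| on neighbourhoods
  have hInt : ∀ (p : ℝ × ℝ) (ε : ℝ) (c : ℝ), c ∈ Set.Icc (0:ℝ) 1 →
      IntegrableOn (fun q => |W q - c|) (nbhd p ε) volume := by
    intro p ε c hc
    have hae : AEMeasurable W (volume.restrict (nbhd p ε)) :=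
      hWmeas.mono_measure (Measure.restrict_mono nbhd_subset le_rfl)
    refine Integrable.mono' (g := fun _ => (1:ℝ))
      (integrableOn_const vol_nbhd_ne_top)
      ((measurable_abs.comp_aemeasurable (hae.sub aemeasurable_const)).aestronglyMeasurable) ?_
    rw [ae_restrict_iff' meas_nbhd]
    refine ae_of_all _ fun q hq => ?_
    have hw := hWrange q (nbhd_subset hq)
    rw [Real.norm_eq_abs, abs_abs, abs_le]
    constructor <;> show _ ≤ _ <;> beta_reduce <;> linarith [hw.1, hw.2, hc.1, hc.2]
  have haeWg : ∀ (p : ℝ × ℝ) (ε : ℝ), (fun q => W q) =ᵐ[volume.restrict (nbhd p ε)] g :=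
    fun p ε => hWg.filter_mono (ae_mono (Measure.restrict_mono nbhd_subset le_rfl))
  -- Lemma A : where U₁ is positive, the set where g is positive has density one
  have lemA : ∀ p ∈ unitSq, 0 < U₁ p → IsDensityPoint (Posg g) p := by
    intro p hp hU
    by_cases hLp : IsLebPoint W p
    · rw [hU₁leb p hp hLp] at hU
      have hcI : W p ∈ Set.Icc (0:ℝ) 1 := hWrange p hp
      apply isDensityPoint_of_lb hp
      intro δ hδ
      have hev := Metric.tendsto_nhds.1 hLp (δ * W p) (mul_pos hδ hU)
      filter_upwards [hev, ev_small] with ε hrat hsm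
      obtain ⟨hε0, hε1⟩ := hsm
      set v := (volume (nbhd p ε)).toReal with hvdef
      have hv : 0 < v := ENNReal.toReal_pos (vol_nbhd_pos hp hε0 hε1).ne' vol_nbhd_ne_top
      set Bad := nbhd p ε ∩ {q | g q ≤ 0} with hBaddef
      have hBadMeas : MeasurableSet Bad := meas_nbhd.inter (hgmeas measurableSet_Iic)
      have hBadfin : volume Bad ≠ ⊤ :=
        ne_top_of_le_ne_top vol_nbhd_ne_top (measure_mono Set.inter_subset_left)
      have hintW := hInt p ε (W p) hcI
      have haeq : (fun q => |W q - W p|) =ᵐ[volume.restrict (nbhd p ε)]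
          (fun q => |g q - W p|) := (haeWg p ε).mono fun q hq => congrArg (fun t => |t - W p|) hq
      have hintg : IntegrableOn (fun q => |g q - W p|) (nbhd p ε) volume :=
        hintW.congr haeq
      have step1 : W p * (volume Bad).toReal ≤ ∫ q in Bad, |g q - W p| := by
        refine (le_of_eq (by rw [smul_eq_mul, measureReal_def, mul_comm])).trans
          (setIntegral_ge_of_const_le (c := W p) hBadMeas hBadfin (fun q hq => ?_)
          (hintg.mono_set Set.inter_subset_left))
        refine le_abs.2 (Or.inr ?_)
        have : g q ≤ 0 := hq.2
        simp only [neg_sub]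
        linarith
      have step2 : ∫ q in Bad, |g q - W p| ≤ ∫ q in nbhd p ε, |g q - W p| :=
        setIntegral_mono_set hintg (ae_of_all _ fun q => abs_nonneg _)
          (HasSubset.Subset.eventuallyLE Set.inter_subset_left)
      have step3 : ∫ q in nbhd p ε, |g q - W p| = ∫ q in nbhd p ε, |W q - W p| :=
        integral_congr_ae haeq.symm
      have hintpos : 0 ≤ ∫ q in nbhd p ε, |W q - W p| :=
        integral_nonneg fun q => abs_nonneg _
      rw [Real.dist_eq, sub_zero,
        abs_of_nonneg (div_nonneg hintpos ENNReal.toReal_nonneg)] at hrat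
      have hIlt : ∫ q in nbhd p ε, |W q - W p| < δ * W p * v := by
        rw [div_lt_iff₀ hv] at hrat; linarith [hrat]
      have hchain : W p * (volume Bad).toReal < W p * (δ * v) := by
        calc W p * (volume Bad).toReal ≤ ∫ q in Bad, |g q - W p| := step1
          _ ≤ ∫ q in nbhd p ε, |g q - W p| := step2
          _ = ∫ q in nbhd p ε, |W q - W p| := step3
          _ < δ * W p * v := hIlt
          _ = W p * (δ * v) := by ring
      have hBadlt : (volume Bad).toReal < δ * v := lt_of_mul_lt_mul_left hchain hU.le
      have hcov : volume (nbhd p ε) ≤ volume (Posg g ∩ nbhd p ε) + volume Bad := by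
        refine (measure_mono ?_).trans (measure_union_le _ _)
        intro q hq
        by_cases hgq : g q ≤ 0
        · exact Or.inr ⟨hq, hgq⟩
        · exact Or.inl ⟨⟨nbhd_subset hq, not_le.1 hgq⟩, hq⟩
      have hPfin : volume (Posg g ∩ nbhd p ε) ≠ ⊤ :=
        ne_top_of_le_ne_top vol_nbhd_ne_top (measure_mono Set.inter_subset_right)
      have hcov' := ENNReal.toReal_mono (ENNReal.add_ne_top.2 ⟨hPfin, hBadfin⟩) hcov
      rw [ENNReal.toReal_add hPfin hBadfin] at hcov'
      linarith
    · by_cases hdens : IsDensityPoint {q ∈ unitSq | W q = 1} p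
      · apply isDensityPoint_of_lb hp
        intro δ hδ
        filter_upwards [densityPoint_lb hdens hδ] with ε hlb
        refine le_trans hlb (ENNReal.toReal_mono
          (ne_top_of_le_ne_top vol_nbhd_ne_top (measure_mono Set.inter_subset_right)) ?_)
        calc volume ({q ∈ unitSq | W q = 1} ∩ nbhd p ε)
            ≤ volume ((Posg g ∩ nbhd p ε) ∪ ({q | W q ≠ g q} ∩ unitSq)) := by
              refine measure_mono fun q hq => ?_
              by_cases hqN : W q = g q
              · exact Or.inl ⟨⟨hq.1.1, by rw [← hqN, hq.1.2]; norm_num⟩, hq.2⟩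
              · exact Or.inr ⟨hqN, hq.1.1⟩
          _ ≤ volume (Posg g ∩ nbhd p ε) + volume ({q | W q ≠ g q} ∩ unitSq) :=
              measure_union_le _ _
          _ = volume (Posg g ∩ nbhd p ε) := by rw [hN, add_zero]
      · rw [hU₁zero p hp hLp hdens] at hU
        exact absurd hU (lt_irrefl 0)
  -- Part (i)
  have part1 : ∀ p ∈ unitSq, 0 < U₁ p → p.1 < p.2 := by
    intro p hp hU
    by_contra hlt
    push_neg at hlt
    have hdp := lemA p hp hU
    rcases eq_or_lt_of_le hlt with heq | hlt2
    · -- diagonal case : p.2 = p.1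
      have key : ∀ ε : ℝ, 0 < ε → ε ≤ 1 →
          (volume (Posg g ∩ nbhd p ε)).toReal ≤ (volume (nbhd p ε)).toReal / 2 := by
        intro ε hε0 hε1
        set S := J p.1 ε with hSdef
        have hnb : nbhd p ε = S ×ˢ S := by
          rw [nbhd_eq, heq]
        set A := (S ×ˢ S) ∩ {q : ℝ × ℝ | q.1 < q.2} with hAdef
        set A' := (S ×ˢ S) ∩ {q : ℝ × ℝ | q.2 < q.1} with hA'def
        have hAmeas : MeasurableSet A :=
          (measJ.prod measJ).inter (measurableSet_lt measurable_fst measurable_snd)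
        have hA'meas : MeasurableSet A' :=
          (measJ.prod measJ).inter (measurableSet_lt measurable_snd measurable_fst)
        have hswap : volume (Prod.swap ⁻¹' A) = volume A := by
          have mp : MeasurePreserving (Prod.swap : ℝ × ℝ → ℝ × ℝ) volume volume := by
            rw [Measure.volume_eq_prod]
            exact Measure.measurePreserving_swap
          exact mp.measure_preimage hAmeas.nullMeasurableSet
        have hpre : Prod.swap ⁻¹' A = A' := by
          ext q
          exact ⟨fun ⟨⟨h1, h2⟩, h3⟩ => ⟨⟨h2, h1⟩, h3⟩, fun ⟨⟨h1, h2⟩, h3⟩ => ⟨⟨h2, h1⟩, h3⟩⟩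
        have hA'vol : volume A' = volume A := by rw [← hpre, hswap]
        have hdisj : Disjoint A A' := by
          rw [Set.disjoint_left]
          rintro q ⟨_, h1⟩ ⟨_, h2⟩
          have h1' : q.1 < q.2 := h1
          have h2' : q.2 < q.1 := h2
          exact absurd h1' (not_lt.2 h2'.le)
        have hsub : A ∪ A' ⊆ nbhd p ε := by
          rw [hnb]; exact Set.union_subset Set.inter_subset_left Set.inter_subset_left
        have hAfin : volume A ≠ ⊤ := by
          have hAn : A ⊆ nbhd p ε := by rw [hnb]; exact Set.inter_subset_left
          exact ne_top_of_le_ne_top vol_nbhd_ne_top (measure_mono hAn)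
        have h2A : 2 * (volume A).toReal ≤ (volume (nbhd p ε)).toReal := by
          have hle : volume A + volume A' ≤ volume (nbhd p ε) := by
            rw [← measure_union hdisj hA'meas]
            exact measure_mono hsub
          rw [hA'vol] at hle
          have := ENNReal.toReal_mono vol_nbhd_ne_top hle
          rw [ENNReal.toReal_add hAfin hAfin] at this
          linarith
        have hPsub : (volume (Posg g ∩ nbhd p ε)).toReal ≤ (volume A).toReal := by
          refine ENNReal.toReal_mono hAfin ?_
          calc volume (Posg g ∩ nbhd p ε)
              ≤ volume (A ∪ ({q : ℝ × ℝ | 0 < g q ∧ ¬ q.1 < q.2} ∩ unitSq)) := by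
                refine measure_mono fun q hq => ?_
                by_cases hqlt : q.1 < q.2
                · refine Or.inl ⟨?_, hqlt⟩
                  have := hq.2
                  rw [hnb] at this
                  exact this
                · exact Or.inr ⟨⟨hq.1.2, hqlt⟩, hq.1.1⟩
            _ ≤ volume A + volume ({q : ℝ × ℝ | 0 < g q ∧ ¬ q.1 < q.2} ∩ unitSq) :=
                measure_union_le _ _
            _ = volume A := by rw [hM1, add_zero]
        linarith
      have hev := densityPoint_lb hdp (δ := (1/4:ℝ)) (by norm_num)
      obtain ⟨ε, hlb, hε0, hε1⟩ := (hev.and ev_small).exists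
      have hv : 0 < (volume (nbhd p ε)).toReal :=
        ENNReal.toReal_pos (vol_nbhd_pos hp hε0 hε1).ne' vol_nbhd_ne_top
      have := key ε hε0 hε1
      linarith
    · -- strictly below the diagonal
      have hsmall : ∀ᶠ ε in nhdsWithin (0:ℝ) (Set.Ioi 0), ε < (p.1 - p.2)/2 :=
        Filter.Eventually.filter_mono nhdsWithin_le_nhds
          (Filter.Tendsto.eventually_lt_const (by linarith) Filter.tendsto_id)
      have hev := densityPoint_lb hdp (δ := (1/2:ℝ)) (by norm_num)
      obtain ⟨ε, hlb, ⟨hε0, hε1⟩, hεs⟩ := (hev.and (ev_small.and hsmall)).exists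
      have hzero : volume (Posg g ∩ nbhd p ε) = 0 := by
        refine measure_mono_null ?_ hM1
        rintro q ⟨⟨hq1, hq2⟩, hq3⟩
        refine ⟨⟨hq2, ?_⟩, hq1⟩
        have hb1 : p.1 - ε < q.1 := hq3.1.1.1
        have hb2 : q.2 < p.2 + ε := hq3.1.2.2
        exact not_lt.2 (by linarith)
      rw [hzero] at hlb
      have hv : 0 < (volume (nbhd p ε)).toReal :=
        ENNReal.toReal_pos (vol_nbhd_pos hp hε0 hε1).ne' vol_nbhd_ne_top
      simp only [ENNReal.toReal_zero] at hlb
      linarith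
  -- Part (ii)
  have part2 : ∀ x ∈ Set.Icc (0:ℝ) 1, ∀ y ∈ Set.Icc (0:ℝ) 1, ∀ z ∈ Set.Icc (0:ℝ) 1,
      0 < U₁ (x, y) → 0 < U₁ (y, z) → U₁ (x, z) = 1 := by
    intro x hx y hy z hz hxy hyz
    have hxy' : ((x,y) : ℝ × ℝ) ∈ unitSq := ⟨hx, hy⟩
    have hyz' : ((y,z) : ℝ × ℝ) ∈ unitSq := ⟨hy, hz⟩
    have hxz' : ((x,z) : ℝ × ℝ) ∈ unitSq := ⟨hx, hz⟩
    have hdx := lemA (x,y) hxy' hxy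
    have hdz := lemA (y,z) hyz' hyz
    have hOg : IsDensityPoint (Oneg g) (x,z) := by
      apply isDensityPoint_of_lb hxz'
      intro δ hδ
      set δ' := min δ (1/2) with hδ'def
      have hδ'0 : 0 < δ' := lt_min hδ (by norm_num)
      have hη : 0 < δ'/8 := by linarith
      have hη4 : δ'/8 ≤ 1/4 := by
        have := min_le_right δ (1/2:ℝ); linarith
      filter_upwards [densityPoint_lb hdx hη, densityPoint_lb hdz hη, ev_small]
        with ε e1 e2 hsm
      obtain ⟨hε0, hε1⟩ := hsm
      have hcore := core g hgmeas hη hη4 hε0 hε1 hx hy hz hsbnull e1 e2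
      have h8 : 1 - 8*(δ'/8) = 1 - δ' := by ring
      rw [h8] at hcore
      have hδ'le : δ' ≤ δ := min_le_left _ _
      have hvnn : (0:ℝ) ≤ (volume (nbhd (x,z) ε)).toReal := ENNReal.toReal_nonneg
      nlinarith [hcore, mul_nonneg (by linarith : (0:ℝ) ≤ δ - δ') hvnn]
    have hOW : IsDensityPoint {q ∈ unitSq | W q = 1} (x,z) := by
      refine isDensityPoint_congr hN ?_ ?_ hOg
      · rintro q ⟨⟨hq1, hq2⟩, hq3⟩
        refine ⟨?_, hq1⟩
        intro hWgq
        exact hq3 ⟨hq1, by rw [hWgq]; exact hq2⟩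
      · rintro q ⟨⟨hq1, hq2⟩, hq3⟩
        refine ⟨?_, hq1⟩
        intro hWgq
        exact hq3 ⟨hq1, by rw [← hWgq]; exact hq2⟩
    by_cases hLp : IsLebPoint W (x,z)
    · rw [hU₁leb _ hxz' hLp]
      by_contra hne
      have hcI := hWrange (x,z) hxz'
      have hclt : W (x,z) < 1 := lt_of_le_of_ne hcI.2 hne
      have h1c : 0 < 1 - W (x,z) := by linarith
      have hev1 := Metric.tendsto_nhds.1 hLp ((1 - W (x,z))/2) (by linarith)
      have hev2 := densityPoint_lb hOg (δ := (1/2:ℝ)) (by norm_num)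
      obtain ⟨ε, hrat, hlb, hε0, hε1⟩ := (hev1.and (hev2.and ev_small)).exists
      set v := (volume (nbhd (x,z) ε)).toReal with hvdef
      have hv : 0 < v := ENNReal.toReal_pos (vol_nbhd_pos hxz' hε0 hε1).ne' vol_nbhd_ne_top
      have hOnegMeas : MeasurableSet (Oneg g) := by
        have hOid : Oneg g = unitSq ∩ g ⁻¹' {1} := by
          ext q; exact ⟨fun ⟨h1, h2⟩ => ⟨h1, h2⟩, fun ⟨h1, h2⟩ => ⟨h1, h2⟩⟩
        rw [hOid]; exact meas_unitSq.inter (hgmeas (measurableSet_singleton 1))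
      have hOmeas : MeasurableSet (Oneg g ∩ nbhd (x,z) ε) := hOnegMeas.inter meas_nbhd
      have hOfin : volume (Oneg g ∩ nbhd (x,z) ε) ≠ ⊤ :=
        ne_top_of_le_ne_top vol_nbhd_ne_top (measure_mono Set.inter_subset_right)
      have hintW := hInt (x,z) ε (W (x,z)) hcI
      have haeq : (fun q => |W q - W (x,z)|) =ᵐ[volume.restrict (nbhd (x,z) ε)]
          (fun q => |g q - W (x,z)|) :=
        (haeWg (x,z) ε).mono fun q hq => congrArg (fun t => |t - W (x,z)|) hq
      have hintg : IntegrableOn (fun q => |g q - W (x,z)|) (nbhd (x,z) ε) volume :=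
        hintW.congr haeq
      have step1 : (1 - W (x,z)) * (volume (Oneg g ∩ nbhd (x,z) ε)).toReal
          ≤ ∫ q in Oneg g ∩ nbhd (x,z) ε, |g q - W (x,z)| := by
        refine (le_of_eq (by rw [smul_eq_mul, measureReal_def, mul_comm])).trans
          (setIntegral_ge_of_const_le (c := 1 - W (x,z)) hOmeas hOfin (fun q hq => ?_)
          (hintg.mono_set Set.inter_subset_right))
        have hq1 : g q = 1 := hq.1.2
        rw [hq1]
        exact le_abs_self _
      have step2 : ∫ q in Oneg g ∩ nbhd (x,z) ε, |g q - W (x,z)|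
          ≤ ∫ q in nbhd (x,z) ε, |g q - W (x,z)| :=
        setIntegral_mono_set hintg (ae_of_all _ fun q => abs_nonneg _)
          (HasSubset.Subset.eventuallyLE Set.inter_subset_right)
      have step3 : ∫ q in nbhd (x,z) ε, |g q - W (x,z)|
          = ∫ q in nbhd (x,z) ε, |W q - W (x,z)| := integral_congr_ae haeq.symm
      have hintpos : 0 ≤ ∫ q in nbhd (x,z) ε, |W q - W (x,z)| :=
        integral_nonneg fun q => abs_nonneg _
      rw [Real.dist_eq, sub_zero,
        abs_of_nonneg (div_nonneg hintpos ENNReal.toReal_nonneg)] at hrat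
      rw [div_lt_iff₀ hv] at hrat
      have hOv : v/2 ≤ (volume (Oneg g ∩ nbhd (x,z) ε)).toReal := by linarith [hlb]
      nlinarith [step1, step2, step3, hrat, hOv, h1c,
        mul_le_mul_of_nonneg_left hOv h1c.le]
    · exact hU₁dens _ hxz' hLp hOW
  -- Part (iii)
  refine ⟨part1, part2, ?_⟩
  set f : ℝ × ℝ → ℝ := unitSq.indicator g with hfdef
  have hfmeas : Measurable f := hgmeas.indicator meas_unitSq
  have hUvol1 : volume unitSq = 1 := by
    rw [unitSq, Measure.volume_eq_prod, Measure.prod_prod, Real.volume_Icc]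
    norm_num
  have hfint : Integrable f volume := by
    refine Integrable.mono' (g := unitSq.indicator fun _ => (1:ℝ))
      ((integrableOn_const (by rw [hUvol1]; norm_num)).integrable_indicator
        meas_unitSq)
      hfmeas.aestronglyMeasurable (ae_of_all _ fun q => ?_)
    by_cases hq : q ∈ unitSq
    · rw [hfdef, Set.indicator_of_mem hq, Set.indicator_of_mem hq, Real.norm_eq_abs,
        abs_of_nonneg (hgrange q).1]
      exact (hgrange q).2
    · rw [hfdef, Set.indicator_of_notMem hq, Set.indicator_of_notMem hq]
      simp
  have hbesi := IsUnifLocDoublingMeasure.ae_tendsto_average_norm_sub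
    (volume : Measure (ℝ × ℝ)) hfint.locallyIntegrable 1
  have hOpen : volume (Set.Ioo (0:ℝ) 1 ×ˢ Set.Ioo (0:ℝ) 1) = 1 := by
    rw [Measure.volume_eq_prod, Measure.prod_prod, Real.volume_Ioo]
    norm_num
  have hbdnull : volume (unitSq \ (Set.Ioo (0:ℝ) 1 ×ˢ Set.Ioo (0:ℝ) 1)) = 0 := by
    have hsub : (Set.Ioo (0:ℝ) 1 ×ˢ Set.Ioo (0:ℝ) 1) ⊆ unitSq :=
      Set.prod_mono Set.Ioo_subset_Icc_self Set.Ioo_subset_Icc_self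
    rw [measure_diff hsub (measurableSet_Ioo.prod measurableSet_Ioo).nullMeasurableSet
      (by rw [hOpen]; exact ENNReal.one_ne_top), hUvol1, hOpen, tsub_self]
  have hintc : ∀ᵐ p ∂(volume.restrict unitSq), p ∈ Set.Ioo (0:ℝ) 1 ×ˢ Set.Ioo (0:ℝ) 1 := by
    rw [ae_iff, Measure.restrict_apply' meas_unitSq]
    refine measure_mono_null (fun q hq => ?_) hbdnull
    exact ⟨hq.2, hq.1⟩
  filter_upwards [ae_restrict_mem meas_unitSq, hWg, hintc,
    hbesi.filter_mono (ae_mono Measure.restrict_le_self)] with p hp hWgp hpo hbes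
  refine hU₁leb p hp ?_
  have htend : Filter.Tendsto
      (fun ε : ℝ => ⨍ q in Metric.closedBall p ε, ‖f q - f p‖ ∂volume)
      (nhdsWithin 0 (Set.Ioi 0)) (nhds 0) := by
    refine hbes (fun _ => p) (fun ε => ε) Filter.tendsto_id ?_
    filter_upwards [self_mem_nhdsWithin] with ε hε
    exact Metric.mem_closedBall_self (by rw [one_mul]; exact le_of_lt hε)
  rw [IsLebPoint]
  refine Filter.Tendsto.congr' ?_ htend
  have hr0 : 0 < min (min p.1 (1 - p.1)) (min p.2 (1 - p.2)) := by
    obtain ⟨⟨h1, h2⟩, h3, h4⟩ := hpo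
    exact lt_min (lt_min h1 (by linarith)) (lt_min h3 (by linarith))
  have hevr : ∀ᶠ ε in nhdsWithin (0:ℝ) (Set.Ioi 0),
      0 < ε ∧ ε < min (min p.1 (1 - p.1)) (min p.2 (1 - p.2)) := by
    have h2 : ∀ᶠ ε in nhdsWithin (0:ℝ) (Set.Ioi 0),
        ε < min (min p.1 (1 - p.1)) (min p.2 (1 - p.2)) :=
      Filter.Eventually.filter_mono nhdsWithin_le_nhds
        (Filter.Tendsto.eventually_lt_const hr0 Filter.tendsto_id)
    filter_upwards [self_mem_nhdsWithin, h2] with ε h1 h2'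
    exact ⟨h1, h2'⟩
  filter_upwards [hevr] with ε hev
  obtain ⟨hε0, hεr⟩ := hev
  have hb1 : ε ≤ p.1 :=
    le_of_lt (lt_of_lt_of_le hεr ((min_le_left _ _).trans (min_le_left _ _)))
  have hb2 : ε ≤ 1 - p.1 :=
    le_of_lt (lt_of_lt_of_le hεr ((min_le_left _ _).trans (min_le_right _ _)))
  have hb3 : ε ≤ p.2 :=
    le_of_lt (lt_of_lt_of_le hεr ((min_le_right _ _).trans (min_le_left _ _)))
  have hb4 : ε ≤ 1 - p.2 :=
    le_of_lt (lt_of_lt_of_le hεr ((min_le_right _ _).trans (min_le_right _ _)))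
  have hball : nbhd p ε = Metric.ball p ε := by
    rw [ballEqProd, nbhd]
    refine Set.inter_eq_left.2 ?_
    refine Set.prod_mono ?_ ?_ <;> intro t ht <;>
      exact ⟨by linarith [ht.1], by linarith [ht.2]⟩
  have hcbeq := ball_ae_cball p hε0
  have hvol : volume (Metric.closedBall p ε) = volume (nbhd p ε) := by
    rw [hball]; exact (measure_congr hcbeq).symm
  have hieq : ∫ q in nbhd p ε, |W q - W p| = ∫ q in Metric.closedBall p ε, ‖f q - f p‖ := by
    have h1 : ∫ q in Metric.closedBall p ε, ‖f q - f p‖ ∂volume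
        = ∫ q in nbhd p ε, ‖f q - f p‖ ∂volume := by
      rw [hball]
      exact (setIntegral_congr_set hcbeq).symm
    rw [h1]
    refine integral_congr_ae ?_
    filter_upwards [haeWg p ε, ae_restrict_mem meas_nbhd] with q hq hqm
    have hfq : f q = g q := Set.indicator_of_mem (nbhd_subset hqm) g
    have hfp : f p = g p := Set.indicator_of_mem hp g
    have hq' : W q = g q := hq
    show |W q - W p| = ‖f q - f p‖
    rw [Real.norm_eq_abs, hfq, hfp, ← hq', ← hWgp]
  show (⨍ q in Metric.closedBall p ε, ‖f q - f p‖ ∂volume)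
      = (∫ q in nbhd p ε, |W q - W p|) / (volume (nbhd p ε)).toReal
  rw [setAverage_eq, smul_eq_mul, measureReal_def, hvol, hieq, inv_mul_eq_div]
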